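/- Let m : ℂ₊ → ℂ₊ be holomorphic with m(z) = ∫ 1/(x−z) dν(x) for a compactly supported probability measure ν on ℝ. If a > 0, b ∈ ℝ and m satisfies a·m(z)² + (z−b)·m(z) + 1 = 0 for all z ∈ ℂ₊, then ν is the semicircle distribution centered at b with density √(4a−(x−b)²)/(2πa) on [b−2√a, b+2√a]. -/

import Mathlib

open Real MeasureTheory Complex

open Filter Topology


lemma sqrt_half_abs_sub (u : ℝ) : Real.sqrt ((|u| - u)/2) = Real.sqrt (-u) := by
  rcases le_total u 0 with h | h
  · rw [abs_of_nonpos h]; ring_nf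
  · rw [_root_.abs_of_nonneg h]
    rw [show (u - u)/2 = 0 by ring, Real.sqrt_zero, eq_comm, Real.sqrt_eq_zero']
    linarith

lemma poisson_subst (f : ℝ → ℝ) {η : ℝ} (hη : 0 < η) (x : ℝ) :
    ∫ E : ℝ, f E * (η / ((x - E)^2 + η^2)) = ∫ t : ℝ, f (x + η*t) * (1 + t^2)⁻¹ := by
  have h1 : ∫ E : ℝ, f E * (η / ((x - E)^2 + η^2))
      = ∫ y : ℝ, f (y + x) * (η / (y^2 + η^2)) := by
    rw [← integral_add_right_eq_self (fun E : ℝ => f E * (η / ((x - E)^2 + η^2))) x]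
    congr 1; ext y; ring_nf
  rw [h1]
  have h2 := MeasureTheory.Measure.integral_comp_mul_left
    (fun y : ℝ => f (y + x) * (η / (y^2 + η^2))) η
  rw [abs_inv, abs_of_pos hη] at h2
  -- h2 : ∫ t, f (η*t + x) * (η/((η*t)^2+η^2)) = η⁻¹ • ∫ y, ...
  have h3 : ∀ t : ℝ, f (η*t + x) * (η / ((η*t)^2 + η^2))
      = η⁻¹ * (f (x + η*t) * (1 + t^2)⁻¹) := by
    intro t
    have : (η*t)^2 + η^2 = η^2 * (1 + t^2) := by ring
    rw [this, add_comm (η*t) x]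
    field_simp
  simp_rw [h3] at h2
  rw [MeasureTheory.integral_const_mul] at h2
  rw [smul_eq_mul] at h2
  have hne : η⁻¹ ≠ 0 := inv_ne_zero hη.ne'
  field_simp at h2
  have e1 : ∀ y : ℝ, f (y + x) * (η / (y^2 + η^2)) = η * f (y + x) / (y^2 + η^2) := fun y => by ring
  have e2 : ∀ t : ℝ, f (x + η*t) * (1 + t^2)⁻¹ = f (x + η*t) / (1 + t^2) := fun t => by ring
  simp_rw [e1, e2]
  exact h2.symm

lemma poisson_limit (f : ℝ → ℝ) (hf : Continuous f) (C : ℝ) (hC : ∀ y, |f y| ≤ C) (x : ℝ) :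
    Tendsto (fun η : ℝ => ∫ t : ℝ, f (x + η*t) * (1 + t^2)⁻¹) (𝓝[>] (0:ℝ))
      (𝓝 (π * f x)) := by
  have key : Tendsto (fun η : ℝ => ∫ t : ℝ, f (x + η*t) * (1 + t^2)⁻¹) (𝓝[>] (0:ℝ))
      (𝓝 (∫ t : ℝ, f x * (1 + t^2)⁻¹)) := by
    apply MeasureTheory.tendsto_integral_filter_of_dominated_convergence
      (fun t : ℝ => C * (1 + t^2)⁻¹)
    · filter_upwards with η
      exact ((hf.comp (by continuity)).mul (Continuous.inv₀ (by continuity) (fun t => by positivity))).aestronglyMeasurable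
    · filter_upwards with η
      filter_upwards with t
      have h1 : (0:ℝ) < 1 + t^2 := by positivity
      rw [norm_mul, Real.norm_eq_abs, Real.norm_eq_abs, abs_of_pos (inv_pos.2 h1)]
      exact mul_le_mul_of_nonneg_right (hC _) (inv_pos.2 h1).le
    · exact integrable_inv_one_add_sq.const_mul C
    · filter_upwards with t
      have : Tendsto (fun η : ℝ => f (x + η*t)) (𝓝 (0:ℝ)) (𝓝 (f x)) := by
        have h2 : Continuous fun η : ℝ => x + η*t := by continuity
        have := (hf.comp h2).tendsto 0
        simpa [Function.comp_def] using this
      exact (this.mono_left nhdsWithin_le_nhds).mul tendsto_const_nhds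
  rw [MeasureTheory.integral_const_mul, integral_univ_inv_one_add_sq, mul_comm] at key
  exact key

lemma im_root_formula {a b : ℝ} (ha : 0 < a) {z μ : ℂ} (hz : 0 < z.im)
    (hμ : 0 < μ.im) (hq : (a:ℂ) * μ^2 + (z - (b:ℂ)) * μ + 1 = 0) :
    μ.im = (Real.sqrt ((‖(z - (b:ℂ))^2 - 4*(a:ℂ)‖
        - ((z - (b:ℂ))^2 - 4*(a:ℂ)).re)/2) - z.im)/(2*a) := by
  set s : ℂ := 2*(a:ℂ)*μ + (z - (b:ℂ)) with hs
  have hs2 : s^2 = (z - (b:ℂ))^2 - 4*(a:ℂ) := by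
    rw [hs]; linear_combination (4*(a:ℂ)) * hq
  have hsim : s.im = 2*a*μ.im + z.im := by
    rw [hs]
    simp [Complex.add_im, Complex.mul_im, Complex.sub_im, Complex.ofReal_re,
      Complex.ofReal_im, Complex.mul_re]
  have hspos : 0 < s.im := by rw [hsim]; nlinarith
  have him2 : s.im^2 = (‖s^2‖ - (s^2).re)/2 := by
    have h1 : ‖s^2‖ = s.re^2 + s.im^2 := by
      rw [norm_pow, Complex.sq_norm, Complex.normSq_apply]; ring
    have h2 : (s^2).re = s.re^2 - s.im^2 := by
      rw [pow_two, Complex.mul_re]; ring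
    rw [h1, h2]; ring
  have hval : s.im = Real.sqrt ((‖(z - (b:ℂ))^2 - 4*(a:ℂ)‖
      - ((z - (b:ℂ))^2 - 4*(a:ℂ)).re)/2) := by
    rw [← hs2, ← him2, Real.sqrt_sq hspos.le]
  rw [← hval, hsim]
  field_simp
  ring

noncomputable def gfun (a b : ℝ) (η E : ℝ) : ℝ :=
  (Real.sqrt ((‖(((E:ℂ) + η*I) - b)^2 - 4*(a:ℂ)‖
      - ((((E:ℂ) + η*I) - b)^2 - 4*(a:ℂ)).re)/2) - η)/(2*a)

lemma gfun_zero (a b : ℝ) (E : ℝ) :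
    gfun a b 0 E = Real.sqrt (4*a - (E - b)^2)/(2*a) := by
  have hz : (((E:ℂ) + (0:ℝ)*I) - b)^2 - 4*(a:ℂ) = ((((E - b)^2 - 4*a : ℝ)):ℂ) := by
    push_cast; ring
  rw [gfun, hz]
  rw [Complex.norm_real, Real.norm_eq_abs, Complex.ofReal_re]
  rw [sqrt_half_abs_sub]
  norm_num [show -((E - b)^2 - 4*a) = 4*a - (E-b)^2 by ring]

lemma gfun_cont (a b E : ℝ) : Continuous fun η : ℝ => gfun a b η E := by
  unfold gfun
  have hc : Continuous fun η : ℝ => (((E:ℂ) + η*I) - b)^2 - 4*(a:ℂ) := by fun_prop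
  have h1 := (continuous_norm.comp hc).sub (Complex.continuous_re.comp hc)
  have h2 := Real.continuous_sqrt.comp (h1.div_const 2)
  exact (h2.sub continuous_id).div_const (2*a)

lemma gfun_lim (a b E : ℝ) :
    Tendsto (fun η : ℝ => gfun a b η E) (𝓝[>] (0:ℝ))
      (𝓝 (Real.sqrt (4*a - (E - b)^2)/(2*a))) := by
  rw [← gfun_zero a b E]
  exact ((gfun_cont a b E).tendsto 0).mono_left nhdsWithin_le_nhds

lemma gfun_bound {a : ℝ} (ha : 0 < a) (b E : ℝ) {η : ℝ} (hη : 0 < η) (hη1 : η ≤ 1) :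
    |gfun a b η E| ≤ (Real.sqrt ((E - b)^2 + 4*a + 1) + 1)/(2*a) := by
  set ζ : ℂ := (((E:ℂ) + η*I) - b)^2 - 4*(a:ℂ) with hζ
  have habs : ‖ζ‖ ≤ (E - b)^2 + 4*a + 1 := by
    have h1 : ‖ζ‖ ≤ ‖(((E:ℂ) + η*I) - b)^2‖ + ‖4*(a:ℂ)‖ := by
      rw [hζ]; exact (norm_sub_le _ _)
    have h2 : ‖(((E:ℂ) + η*I) - b)^2‖ = (E - b)^2 + η^2 := by
      rw [norm_pow, ← Complex.normSq_eq_norm_sq, Complex.normSq_apply]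
      simp [Complex.add_re, Complex.add_im, Complex.sub_re, Complex.sub_im]
      ring
    have h3 : ‖4*(a:ℂ)‖ = 4*a := by
      rw [show (4:ℂ)*(a:ℂ) = (((4*a : ℝ)):ℂ) by push_cast; ring, Complex.norm_real, Real.norm_eq_abs]
      rw [_root_.abs_of_nonneg (by linarith)]
    nlinarith [h1, h2, h3]
  have hS : Real.sqrt ((‖ζ‖ - ζ.re)/2) ≤ Real.sqrt ((E - b)^2 + 4*a + 1) := by
    apply Real.sqrt_le_sqrt
    have := Complex.abs_re_le_norm ζ
    have := norm_nonneg ζ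
    cases' abs_le.1 (Complex.abs_re_le_norm ζ) with h4 h5
    linarith
  have hS0 : 0 ≤ Real.sqrt ((‖ζ‖ - ζ.re)/2) := Real.sqrt_nonneg _
  rw [gfun, abs_div, _root_.abs_of_nonneg (by linarith : (0:ℝ) ≤ 2*a)]
  apply div_le_div_of_nonneg_right ?_ (by linarith)
  rw [abs_le]
  constructor
  · nlinarith [Real.sqrt_nonneg ((E - b)^2 + 4*a + 1)]
  · linarith

lemma stieltjes_integrand_integrable (ν : Measure ℝ) [IsFiniteMeasure ν] {z : ℂ}
    (hz : 0 < z.im) : Integrable (fun x : ℝ => ((x:ℂ) - z)⁻¹) ν := by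
  have hne : ∀ x : ℝ, ((x:ℂ) - z) ≠ 0 := by
    intro x h
    have : ((x:ℂ) - z).im = 0 := by rw [h]; simp
    simp only [Complex.sub_im, Complex.ofReal_im] at this
    linarith
  apply Integrable.mono' (integrable_const (z.im)⁻¹)
  · exact (Continuous.inv₀ (by fun_prop) hne).aestronglyMeasurable
  · filter_upwards with x
    rw [norm_inv]
    have h1 : z.im ≤ ‖(x:ℂ) - z‖ := by
      have := Complex.abs_im_le_norm ((x:ℂ) - z)
      simp only [Complex.sub_im, Complex.ofReal_im, zero_sub, abs_neg] at this
      calc z.im ≤ |z.im| := le_abs_self _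
      _ ≤ _ := this
    calc ‖((x:ℂ) - z)‖⁻¹ ≤ (z.im)⁻¹ := by
          apply inv_anti₀ hz
          exact h1
    _ = _ := rfl

lemma im_stieltjes (ν : Measure ℝ) [IsFiniteMeasure ν] {z : ℂ} (hz : 0 < z.im) :
    (∫ x : ℝ, ((x:ℂ) - z)⁻¹ ∂ν).im = ∫ x : ℝ, z.im/((x - z.re)^2 + z.im^2) ∂ν := by
  have hint := stieltjes_integrand_integrable ν hz
  have him := (ContinuousLinearMap.integral_comp_comm Complex.imCLM hint).symm
  simp only [Complex.imCLM_apply] at him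
  rw [him]
  congr 1
  ext x
  rw [Complex.inv_im]
  simp only [Complex.sub_im, Complex.sub_re, Complex.ofReal_im, Complex.ofReal_re,
    Complex.normSq_apply, Complex.sub_re, Complex.sub_im]
  rw [zero_sub, neg_neg]
  congr 1
  ring

lemma gfun_contE (a b η : ℝ) : Continuous fun E : ℝ => gfun a b η E := by
  unfold gfun
  have hc : Continuous fun E : ℝ => (((E:ℂ) + η*I) - b)^2 - 4*(a:ℂ) := by fun_prop
  have h1 := (continuous_norm.comp hc).sub (Complex.continuous_re.comp hc)
  have h2 := Real.continuous_sqrt.comp (h1.div_const 2)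
  exact (h2.sub continuous_const).div_const (2*a)

lemma key_integral_eq (a b : ℝ) (ha : 0 < a) (ν : Measure ℝ) [IsProbabilityMeasure ν]
    (m : ℂ → ℂ)
    (hmap : ∀ z : ℂ, 0 < z.im → 0 < (m z).im)
    (hrep : ∀ z : ℂ, 0 < z.im → m z = ∫ x : ℝ, ((x : ℂ) - z)⁻¹ ∂ν)
    (hquad : ∀ z : ℂ, 0 < z.im →
      (a : ℂ) * m z ^ 2 + (z - (b : ℂ)) * m z + 1 = 0)
    (f : ℝ → ℝ) (hf : Continuous f) (hcs : HasCompactSupport f) :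
    ∫ x, f x ∂ν = ∫ E : ℝ, f E * (Real.sqrt (4*a - (E - b)^2)/(2*π*a)) := by
  obtain ⟨x₀, hC⟩ := (hf.abs).exists_forall_ge_of_hasCompactSupport hcs.abs
  set C := |f x₀| with hCdef
  have hC0 : 0 ≤ C := abs_nonneg _
  set L : ℝ → ℝ := fun η => ∫ E : ℝ, f E * (m ((E:ℂ) + η*I)).im with hLdef
  have hzim : ∀ η E : ℝ, ((E:ℂ) + η*I).im = η := by intro η E; simp
  have hzre : ∀ η E : ℝ, ((E:ℂ) + η*I).re = E := by intro η E; simp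
  -- step 1
  have him : ∀ η : ℝ, 0 < η → ∀ E : ℝ,
      (m ((E:ℂ) + η*I)).im = ∫ x : ℝ, η/((x - E)^2 + η^2) ∂ν := by
    intro η hη E
    have hzpos : 0 < ((E:ℂ) + η*I).im := by rw [hzim]; exact hη
    rw [hrep _ hzpos, im_stieltjes ν hzpos, hzim, hzre]
  -- step 1'
  have hgf : ∀ η : ℝ, 0 < η → ∀ E : ℝ,
      (m ((E:ℂ) + η*I)).im = gfun a b η E := by
    intro η hη E
    have hzpos : 0 < ((E:ℂ) + η*I).im := by rw [hzim]; exact hη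
    rw [im_root_formula ha hzpos (hmap _ hzpos) (hquad _ hzpos), gfun, hzim]
  -- step 2
  have hL : ∀ η : ℝ, 0 < η →
      L η = ∫ x : ℝ, (∫ t : ℝ, f (x + η*t) * (1 + t^2)⁻¹) ∂ν := by
    intro η hη
    have h1 : L η = ∫ E : ℝ, ∫ x : ℝ, f E * (η/((x - E)^2 + η^2)) ∂ν := by
      rw [hLdef]
      refine integral_congr_ae (Filter.Eventually.of_forall fun E => ?_)
      show f E * (m ((E:ℂ) + η*I)).im = _
      rw [him η hη E, ← MeasureTheory.integral_const_mul]
    have hswap : Integrable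
        (Function.uncurry fun E x : ℝ => f E * (η/((x - E)^2 + η^2)))
        (volume.prod ν) := by
      apply Integrable.mono'
        (((hf.abs).integrable_of_hasCompactSupport hcs.abs).mul_prod
          (integrable_const (η⁻¹) (μ := ν)))
      · apply Continuous.aestronglyMeasurable
        apply Continuous.mul (hf.comp continuous_fst)
        exact continuous_const.div (by fun_prop) (fun p => by positivity)
      · filter_upwards with p
        rw [Function.uncurry]
        rw [norm_mul, Real.norm_eq_abs, Real.norm_eq_abs]
        apply mul_le_mul_of_nonneg_left ?_ (abs_nonneg _) |>.trans_eq rfl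
        have hd : η^2 ≤ (p.2 - p.1)^2 + η^2 := by nlinarith [sq_nonneg (p.2 - p.1)]
        have hd0 : (0:ℝ) < (p.2 - p.1)^2 + η^2 := by positivity
        rw [abs_of_pos (div_pos hη hd0)]
        calc η / ((p.2 - p.1)^2 + η^2) ≤ η / η^2 :=
              div_le_div_of_nonneg_left hη.le (by positivity) hd
        _ = η⁻¹ := by field_simp [pow_two]
    rw [h1, MeasureTheory.integral_integral_swap hswap]
    refine integral_congr_ae (Filter.Eventually.of_forall fun x => ?_)
    exact poisson_subst f hη x
  -- step 3
  have hmem : ∀ᶠ η in 𝓝[>] (0:ℝ), 0 < η := eventually_mem_nhdsWithin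
  have hlim1 : Tendsto L (𝓝[>] (0:ℝ)) (𝓝 (π * ∫ x, f x ∂ν)) := by
    have h2 : Tendsto (fun η : ℝ => ∫ x : ℝ, (∫ t : ℝ, f (x + η*t) * (1 + t^2)⁻¹) ∂ν)
        (𝓝[>] (0:ℝ)) (𝓝 (∫ x : ℝ, π * f x ∂ν)) := by
      apply MeasureTheory.tendsto_integral_filter_of_dominated_convergence
        (fun _ : ℝ => C * π)
      · filter_upwards with η
        apply Continuous.aestronglyMeasurable
        apply MeasureTheory.continuous_of_dominated
          (bound := fun t : ℝ => C * (1 + t^2)⁻¹)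
        · intro x
          exact ((hf.comp (by fun_prop)).mul
            (Continuous.inv₀ (by fun_prop) (fun t => by positivity))).aestronglyMeasurable
        · intro x
          filter_upwards with t
          have h1t : (0:ℝ) < 1 + t^2 := by positivity
          rw [norm_mul, Real.norm_eq_abs, Real.norm_eq_abs, abs_of_pos (inv_pos.2 h1t)]
          exact mul_le_mul_of_nonneg_right (hC _) (inv_pos.2 h1t).le
        · exact integrable_inv_one_add_sq.const_mul C
        · filter_upwards with t
          exact (hf.comp (by fun_prop)).mul continuous_const
      · filter_upwards with η
        filter_upwards with x
        calc ‖∫ t : ℝ, f (x + η*t) * (1 + t^2)⁻¹‖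
            ≤ ∫ t : ℝ, C * (1 + t^2)⁻¹ := by
              apply norm_integral_le_of_norm_le (integrable_inv_one_add_sq.const_mul C)
              filter_upwards with t
              have h1t : (0:ℝ) < 1 + t^2 := by positivity
              rw [norm_mul, Real.norm_eq_abs, Real.norm_eq_abs, abs_of_pos (inv_pos.2 h1t)]
              exact mul_le_mul_of_nonneg_right (hC _) (inv_pos.2 h1t).le
        _ = C * π := by rw [MeasureTheory.integral_const_mul, integral_univ_inv_one_add_sq]
      · exact integrable_const _
      · filter_upwards with x using poisson_limit f hf C hC x
    rw [MeasureTheory.integral_const_mul] at h2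
    apply Tendsto.congr' ?_ h2
    filter_upwards [hmem] with η hη
    exact (hL η hη).symm
  -- step 4
  have hlim2 : Tendsto L (𝓝[>] (0:ℝ))
      (𝓝 (∫ E : ℝ, f E * (Real.sqrt (4*a - (E - b)^2)/(2*a)))) := by
    have h2 : Tendsto (fun η : ℝ => ∫ E : ℝ, f E * gfun a b η E)
        (𝓝[>] (0:ℝ)) (𝓝 (∫ E : ℝ, f E * (Real.sqrt (4*a - (E - b)^2)/(2*a)))) := by
      apply MeasureTheory.tendsto_integral_filter_of_dominated_convergence
        (fun E : ℝ => |f E| * ((Real.sqrt ((E - b)^2 + 4*a + 1) + 1)/(2*a)))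
      · filter_upwards with η
        exact (hf.mul (gfun_contE a b η)).aestronglyMeasurable
      · filter_upwards [Ioc_mem_nhdsGT_of_mem (by norm_num : (0:ℝ) ∈ Set.Ico (0:ℝ) 1)]
          with η hη
        filter_upwards with E
        rw [norm_mul, Real.norm_eq_abs, Real.norm_eq_abs]
        exact mul_le_mul_of_nonneg_left (gfun_bound ha b E hη.1 hη.2) (abs_nonneg _)
      · apply Continuous.integrable_of_hasCompactSupport
        · apply (hf.abs).mul
          apply Continuous.div_const
          apply Continuous.add ?_ continuous_const
          exact Real.continuous_sqrt.comp (by fun_prop)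
        · exact hcs.abs.mul_right
      · filter_upwards with E
        exact tendsto_const_nhds.mul (gfun_lim a b E)
    apply Tendsto.congr' ?_ h2
    filter_upwards [hmem] with η hη
    rw [hLdef]
    refine integral_congr_ae (Filter.Eventually.of_forall fun E => ?_)
    show f E * gfun a b η E = f E * (m ((E:ℂ) + η*I)).im
    rw [hgf η hη E]
  have main : π * ∫ x, f x ∂ν = ∫ E : ℝ, f E * (Real.sqrt (4*a - (E - b)^2)/(2*a)) :=
    tendsto_nhds_unique hlim1 hlim2
  have hπ : (π:ℝ) ≠ 0 := Real.pi_ne_zero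
  calc ∫ x, f x ∂ν = π⁻¹ * (π * ∫ x, f x ∂ν) := by field_simp
  _ = π⁻¹ * ∫ E : ℝ, f E * (Real.sqrt (4*a - (E - b)^2)/(2*a)) := by rw [main]
  _ = ∫ E : ℝ, π⁻¹ * (f E * (Real.sqrt (4*a - (E - b)^2)/(2*a))) :=
      (MeasureTheory.integral_const_mul _ _).symm
  _ = ∫ E : ℝ, f E * (Real.sqrt (4*a - (E - b)^2)/(2*π*a)) := by
      refine integral_congr_ae (Filter.Eventually.of_forall fun E => ?_)
      simp only [div_eq_mul_inv]
      rw [show (2*π*a) = (2*a)*π by ring, mul_inv]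
      ring

/-- if `m : ℂ₊ → ℂ₊` is holomorphic, is the Stieltjes transform
of a compactly supported probability measure `ν` on `ℝ`, and satisfies the
quadratic equation `a·m(z)² + (z−b)·m(z) + 1 = 0` on the upper half-plane,
then `ν` is the semicircle distribution centered at `b` with density
`√(4a−(x−b)²)/(2πa)`. -/
theorem stieltjes_quadratic_implies_semicircle
    (a b : ℝ) (ha : 0 < a) (ν : Measure ℝ) [IsProbabilityMeasure ν]
    (hcomp : ∃ R : ℝ, ν {x : ℝ | R < |x|} = 0)
    (m : ℂ → ℂ)
    (hhol : DifferentiableOn ℂ m {z : ℂ | 0 < z.im})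
    (hmap : ∀ z : ℂ, 0 < z.im → 0 < (m z).im)
    (hrep : ∀ z : ℂ, 0 < z.im → m z = ∫ x : ℝ, ((x : ℂ) - z)⁻¹ ∂ν)
    (hquad : ∀ z : ℂ, 0 < z.im →
      (a : ℂ) * m z ^ 2 + (z - (b : ℂ)) * m z + 1 = 0) :
    ν = volume.withDensity
      (fun x : ℝ => ENNReal.ofReal (Real.sqrt (4 * a - (x - b) ^ 2) / (2 * π * a))) := by
  set dR : ℝ → ℝ := fun x => Real.sqrt (4 * a - (x - b) ^ 2) / (2 * π * a) with hdR
  have hπa : (0:ℝ) < 2 * π * a := by positivity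
  have hdR0 : ∀ x, 0 ≤ dR x := fun x => div_nonneg (Real.sqrt_nonneg _) hπa.le
  have hdRc : Continuous dR := (Real.continuous_sqrt.comp (by fun_prop)).div_const _
  have hdRsupp : ∀ x : ℝ, 2 * Real.sqrt a < |x - b| → dR x = 0 := by
    intro x hx
    have h0 : (0:ℝ) ≤ 2 * Real.sqrt a := by positivity
    have h1 : (2 * Real.sqrt a)^2 < |x - b|^2 := pow_lt_pow_left₀ hx h0 (by norm_num)
    have h2 : (2 * Real.sqrt a)^2 = 4 * a := by rw [mul_pow, Real.sq_sqrt ha.le]; ring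
    have h3 : |x - b|^2 = (x - b)^2 := sq_abs _
    have h4 : 4 * a - (x - b)^2 ≤ 0 := by nlinarith
    show Real.sqrt (4 * a - (x - b) ^ 2) / (2 * π * a) = 0
    rw [Real.sqrt_eq_zero'.2 h4, zero_div]
  have hdRcs : HasCompactSupport dR := by
    apply HasCompactSupport.intro
      (isCompact_Icc (a := b - (2*Real.sqrt a + 1)) (b := b + (2*Real.sqrt a + 1)))
    intro x hx
    rw [Set.mem_Icc] at hx
    push_neg at hx
    apply hdRsupp
    have hs := Real.sqrt_nonneg a
    rcases lt_or_ge x (b - (2*Real.sqrt a + 1)) with h | h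
    · rw [abs_sub_comm, abs_of_pos (by linarith)]; linarith
    · have h' := hx (by linarith)
      rw [abs_of_pos (by linarith)]; linarith
  have hint_dR : Integrable dR := hdRc.integrable_of_hasCompactSupport hdRcs
  set μsc := volume.withDensity (fun x => ENNReal.ofReal (dR x)) with hμsc
  haveI hfin : IsFiniteMeasure μsc := isFiniteMeasure_withDensity_ofReal hint_dR.2
  -- integral against μsc
  have hD : ∀ h : ℝ → ℝ, ∫ x, h x ∂μsc = ∫ x, h x * dR x := by
    intro h
    have hmeas : Measurable fun x => Real.toNNReal (dR x) := hdRc.measurable.real_toNNReal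
    have he : μsc = volume.withDensity (fun x => ((Real.toNNReal (dR x) : NNReal) : ENNReal)) := rfl
    rw [he, integral_withDensity_eq_integral_smul hmeas]
    refine integral_congr_ae (Filter.Eventually.of_forall fun x => ?_)
    show (dR x).toNNReal • h x = h x * dR x
    rw [NNReal.smul_def, Real.coe_toNNReal _ (hdR0 x), smul_eq_mul, mul_comm]
  -- main equality for compactly supported continuous functions
  have hmain : ∀ f : ℝ → ℝ, Continuous f → HasCompactSupport f →
      ∫ x, f x ∂ν = ∫ x, f x ∂μsc := by
    intro f hfc hfcs
    rw [key_integral_eq a b ha ν m hmap hrep hquad f hfc hfcs, hD f]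
  -- cutoff
  obtain ⟨R, hR⟩ := hcomp
  set T : ℝ := max R (|b| + 2*Real.sqrt a) + 1 with hT
  have hT0 : (0:ℝ) ≤ T := by
    rw [hT]
    have h1 := le_max_right R (|b| + 2*Real.sqrt a)
    have h2 := abs_nonneg b
    have h3 := Real.sqrt_nonneg a
    linarith
  have hνnull : ν {x : ℝ | T < |x|} = 0 := by
    apply measure_mono_null _ hR
    intro x hx
    have : R ≤ T := by rw [hT]; have := le_max_left R (|b| + 2*Real.sqrt a); linarith
    exact lt_of_le_of_lt this hx
  have hμnull : μsc {x : ℝ | T < |x|} = 0 := by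
    have hSm : MeasurableSet {x : ℝ | T < |x|} :=
      measurableSet_lt measurable_const continuous_abs.measurable
    rw [hμsc, withDensity_apply _ hSm]
    have hz : ∀ᵐ x ∂volume, x ∈ {x : ℝ | T < |x|} → ENNReal.ofReal (dR x) = 0 := by
      refine Filter.Eventually.of_forall fun x hx => ?_
      have h1 : |b| + 2*Real.sqrt a < |x| := by
        have := le_max_right R (|b| + 2*Real.sqrt a)
        have hx' : T < |x| := hx
        rw [hT] at hx'
        linarith
      have h2 : 2*Real.sqrt a < |x - b| := by
        have := abs_sub_abs_le_abs_sub x b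
        linarith
      rw [hdRsupp x h2, ENNReal.ofReal_zero]
    rw [setLIntegral_congr_fun_ae hSm hz, lintegral_zero]
  -- cutoff function
  set χ : ℝ → ℝ := fun x => max 0 (min 1 (T + 1 - |x|)) with hχ
  have hχc : Continuous χ :=
    continuous_const.max (continuous_const.min (continuous_const.sub continuous_abs))
  have hχcs : HasCompactSupport χ := by
    apply HasCompactSupport.intro (isCompact_Icc (a := -(T+1)) (b := T+1))
    intro x hx
    rw [Set.mem_Icc] at hx
    have h1 : T + 1 < |x| := by
      rcases not_and_or.1 hx with h | h
      · push_neg at h; rw [abs_of_neg (by linarith)]; linarith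
      · push_neg at h; rw [abs_of_pos (by linarith)]; linarith
    show max 0 (min 1 (T + 1 - |x|)) = 0
    have h2 : min 1 (T + 1 - |x|) ≤ 0 := le_trans (min_le_right _ _) (by linarith)
    exact max_eq_left h2
  have hχ1 : ∀ x : ℝ, |x| ≤ T → χ x = 1 := by
    intro x hx
    show max 0 (min 1 (T + 1 - |x|)) = 1
    rw [min_eq_left (by linarith), max_eq_right (by norm_num)]
  -- conclude by extensionality
  refine MeasureTheory.ext_of_forall_lintegral_eq_of_IsFiniteMeasure fun g => ?_
  set f₀ : ℝ → ℝ := fun x => (g x : ℝ) with hf₀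
  have hf₀c : Continuous f₀ := NNReal.continuous_coe.comp g.continuous
  have hint_ν : Integrable f₀ ν := BoundedContinuousFunction.integrable_of_nnreal ν g
  have hint_μ : Integrable f₀ μsc := BoundedContinuousFunction.integrable_of_nnreal μsc g
  rw [MeasureTheory.lintegral_coe_eq_integral g hint_ν,
    MeasureTheory.lintegral_coe_eq_integral g hint_μ]
  congr 1
  set fc : ℝ → ℝ := fun x => f₀ x * χ x with hfc
  have hfcc : Continuous fc := hf₀c.mul hχc
  have hfccs : HasCompactSupport fc := hχcs.mul_left
  have hsub : {x : ℝ | ¬ f₀ x = fc x} ⊆ {x : ℝ | T < |x|} := by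
    intro x hx
    by_contra h
    apply hx
    have h' : |x| ≤ T := by simpa [Set.mem_setOf_eq, not_lt] using h
    show f₀ x = f₀ x * χ x
    rw [hχ1 x h', mul_one]
  have h1 : ∫ x, f₀ x ∂ν = ∫ x, fc x ∂ν := by
    refine integral_congr_ae ?_
    rw [Filter.EventuallyEq, ae_iff]
    exact measure_mono_null hsub hνnull
  have h2 : ∫ x, f₀ x ∂μsc = ∫ x, fc x ∂μsc := by
    refine integral_congr_ae ?_
    rw [Filter.EventuallyEq, ae_iff]
    exact measure_mono_null hsub hμnull
  rw [h1, h2]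
  exact hmain fc hfcc hfccs
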